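/- arXiv:2002.01498 — 2 statements merged into one kernel-verified Lean document; each statement's English description precedes it below -/
import Mathlib

section
/- Let k ≥ 2 and let H be an n-vertex blow-up of the Andrásfai graph Γ_k with vertex classes V_0,...,V_{3k−2} and with independence number α(H) ≤ s. Then for every i (indices modulo 3k−1) one has (k−1)n − (3k−4)s ≤ |V_i| ≤ 3s − n. -/
open Finset

/-- The Andrásfai graph `Γ_k`. -/
def andrasfai (k : ℕ) : SimpleGraph (Fin (3 * k - 1)) where
  Adj i j := i ≠ j ∧
    ((i.val + (3 * k - 1) - j.val) % (3 * k - 1) ∈ Finset.Icc k (2 * k - 1) ∨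
     (j.val + (3 * k - 1) - i.val) % (3 * k - 1) ∈ Finset.Icc k (2 * k - 1))
  symm := ⟨fun _ _ h => ⟨h.1.symm, h.2.symm⟩⟩
  loopless := ⟨fun _ h => h.1 rfl⟩

/-- The blow-up of a graph `F` with class sizes given by `w`. -/
def SimpleGraph.blowup {α : Type*} (F : SimpleGraph α) (w : α → ℕ) :
    SimpleGraph (Σ a, Fin (w a)) where
  Adj x y := F.Adj x.1 y.1
  symm := ⟨fun _ _ h => F.symm.symm _ _ h⟩
  loopless := ⟨fun x h => F.loopless.irrefl x.1 h⟩

open Fin.NatCast Fin.CommRing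

/-- If `k ≥ 2` and `H` is an `n`-vertex blow-up of `Γ_k` with vertex classes of
sizes `w i` and independence number at most `s`, then for every `i` one has
`(k-1)n - (3k-4)s ≤ |V_i| ≤ 3s - n`. -/
theorem stmt_10 (k : ℕ) (hk : 2 ≤ k) (w : Fin (3 * k - 1) → ℕ) (n s : ℕ)
    (hn : n = ∑ i, w i)
    (hindep : ∀ S : Finset (Σ i, Fin (w i)),
      (∀ a ∈ S, ∀ b ∈ S, ¬ ((andrasfai k).blowup w).Adj a b) → S.card ≤ s) :
    ∀ i, ((k : ℤ) - 1) * n - (3 * (k : ℤ) - 4) * s ≤ (w i : ℤ) ∧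
      (w i : ℤ) ≤ 3 * (s : ℤ) - n := by
  haveI hNZ : NeZero (3 * k - 1) := ⟨by omega⟩
  have dval : ∀ (a : Fin (3 * k - 1)) (t₁ t₂ : ℕ), t₁ < k → t₂ < k →
      ((a + (t₁ : Fin (3 * k - 1))).val + (3 * k - 1) - (a + (t₂ : Fin (3 * k - 1))).val)
        % (3 * k - 1) ∉ Finset.Icc k (2 * k - 1) := by
    intro a t₁ t₂ h₁ h₂
    have hB : (a + (t₂ : Fin (3 * k - 1))).val < 3 * k - 1 := (a + _).is_lt
    have hsub : ((a + (t₁ : Fin (3 * k - 1))).val + (3 * k - 1)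
        - (a + (t₂ : Fin (3 * k - 1))).val) % (3 * k - 1)
        = ((a + (t₁ : Fin (3 * k - 1))) - (a + (t₂ : Fin (3 * k - 1)))).val := by
      rw [Fin.sub_def]
      congr 1
      rw [Nat.add_sub_assoc (le_of_lt hB), Nat.add_comm]
    rw [hsub]
    have heq : (a + (t₁ : Fin (3 * k - 1))) - (a + (t₂ : Fin (3 * k - 1)))
        = (t₁ : Fin (3 * k - 1)) - (t₂ : Fin (3 * k - 1)) := by ring
    rw [heq]
    rcases le_or_gt t₂ t₁ with h | h
    · rw [← Nat.cast_sub h, Fin.val_cast_of_lt (by omega : t₁ - t₂ < 3 * k - 1)]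
      simp only [Finset.mem_Icc, not_and]
      omega
    · rw [Fin.sub_def]
      simp only [Fin.val_cast_of_lt (by omega : t₁ < 3 * k - 1),
        Fin.val_cast_of_lt (by omega : t₂ < 3 * k - 1)]
      rw [Nat.mod_eq_of_lt (by omega)]
      simp only [Finset.mem_Icc, not_and]
      omega
  have key : ∀ a : Fin (3 * k - 1),
      ∑ t ∈ Finset.range k, w (a + (t : Fin (3 * k - 1))) ≤ s := by
    intro a
    have hinj : ∀ t₁ ∈ Finset.range k, ∀ t₂ ∈ Finset.range k,
        a + (t₁ : Fin (3 * k - 1)) = a + (t₂ : Fin (3 * k - 1)) → t₁ = t₂ := by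
      intro t₁ h₁ t₂ h₂ h
      simp only [Finset.mem_range] at h₁ h₂
      have hc := add_left_cancel h
      have h1 : ((t₁ : Fin (3 * k - 1)) : ℕ) = t₁ := Fin.val_cast_of_lt (by omega)
      have h2 : ((t₂ : Fin (3 * k - 1)) : ℕ) = t₂ := Fin.val_cast_of_lt (by omega)
      rw [← h1, ← h2, hc]
    set S : Finset (Σ i, Fin (w i)) :=
      ((Finset.range k).image (fun t : ℕ => a + (t : Fin (3 * k - 1)))).sigma
        (fun j => (Finset.univ : Finset (Fin (w j)))) with hS
    have hcard : S.card = ∑ t ∈ Finset.range k, w (a + (t : Fin (3 * k - 1))) := by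
      rw [hS, Finset.card_sigma, Finset.sum_image hinj]
      simp
    have hind : ∀ x ∈ S, ∀ y ∈ S, ¬ ((andrasfai k).blowup w).Adj x y := by
      intro x hx y hy hadj
      rw [hS, Finset.mem_sigma] at hx hy
      obtain ⟨t₁, ht₁, hx1⟩ := Finset.mem_image.mp hx.1
      obtain ⟨t₂, ht₂, hy1⟩ := Finset.mem_image.mp hy.1
      simp only [Finset.mem_range] at ht₁ ht₂
      have hadj' : (andrasfai k).Adj x.1 y.1 := hadj
      rw [← hx1, ← hy1] at hadj'
      rcases hadj'.2 with hd | hd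
      · exact dval a t₁ t₂ ht₁ ht₂ hd
      · exact dval a t₂ t₁ ht₂ ht₁ hd
    exact hcard ▸ hindep S hind
  have cycle : ∀ a : Fin (3 * k - 1),
      ∑ t ∈ Finset.range (3 * k - 1), w (a + (t : Fin (3 * k - 1))) = n := by
    intro a
    have h1 : ∑ x : Fin (3 * k - 1), w (a + (((x : ℕ)) : Fin (3 * k - 1)))
        = ∑ t ∈ Finset.range (3 * k - 1), w (a + (t : Fin (3 * k - 1))) :=
      Fin.sum_univ_eq_sum_range (fun t => w (a + (t : Fin (3 * k - 1)))) _
    rw [← h1]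
    simp only [Fin.cast_val_eq_self]
    rw [hn]
    exact Fintype.sum_equiv (Equiv.addLeft a) _ _ (fun x => rfl)
  set T : Fin (3 * k - 1) → ℕ :=
    fun a => ∑ t ∈ Finset.range k, w (a + (t : Fin (3 * k - 1))) with hT
  have shift : ∀ (a : Fin (3 * k - 1)) (c : ℕ),
      ∑ t ∈ Finset.Ico c (c + k), w (a + (t : Fin (3 * k - 1)))
        = T (a + (c : Fin (3 * k - 1))) := by
    intro a c
    rw [Finset.sum_Ico_eq_sum_range]
    simp only [Nat.add_sub_cancel_left, hT]
    apply Finset.sum_congr rfl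
    intro t _
    congr 1
    push_cast
    ring
  intro i
  have three : T i + T (i + (k : Fin (3 * k - 1))) + T (i + ((2 * k : ℕ) : Fin (3 * k - 1)))
      = n + w i := by
    have e1 : ∑ t ∈ Finset.range (3 * k), w (i + (t : Fin (3 * k - 1)))
        = T i + T (i + (k : Fin (3 * k - 1))) + T (i + ((2 * k : ℕ) : Fin (3 * k - 1))) := by
      rw [Finset.range_eq_Ico,
        ← Finset.sum_Ico_consecutive (fun t : ℕ => w (i + (t : Fin (3 * k - 1))))
          (by omega : (0:ℕ) ≤ 2 * k) (by omega : 2 * k ≤ 3 * k),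
        ← Finset.sum_Ico_consecutive (fun t : ℕ => w (i + (t : Fin (3 * k - 1))))
          (by omega : (0:ℕ) ≤ k) (by omega : k ≤ 2 * k)]
      have hA : Finset.Ico (0:ℕ) k = Finset.Ico 0 (0 + k) := by norm_num
      have hB : Finset.Ico k (2 * k) = Finset.Ico k (k + k) := by ring_nf
      have hC : Finset.Ico (2 * k) (3 * k) = Finset.Ico (2 * k) (2 * k + k) := by ring_nf
      rw [hA, hB, hC, shift i 0, shift i k, shift i (2 * k)]
      norm_num
    have e2 : ∑ t ∈ Finset.range (3 * k), w (i + (t : Fin (3 * k - 1)))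
        = n + w i := by
      have h3k : Finset.range (3 * k) = Finset.range ((3 * k - 1) + 1) := by
        congr 1
        omega
      rw [h3k, Finset.sum_range_succ, cycle i]
      congr 1
      rw [Fin.natCast_self]
      simp
    rw [← e1, e2]
  have total : ∑ a : Fin (3 * k - 1), T a = k * n := by
    simp only [hT]
    rw [Finset.sum_comm]
    have inner : ∀ t ∈ Finset.range k,
        ∑ a : Fin (3 * k - 1), w (a + (t : Fin (3 * k - 1))) = n := by
      intro t _
      rw [hn]
      exact Fintype.sum_equiv (Equiv.addRight (t : Fin (3 * k - 1))) _ _ (fun x => rfl)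
    rw [Finset.sum_congr rfl inner]
    simp [mul_comm]
  -- distinctness of the three shift points
  have hvk : ((k : Fin (3 * k - 1)) : ℕ) = k := Fin.val_cast_of_lt (by omega)
  have hv2k : (((2 * k : ℕ) : Fin (3 * k - 1)) : ℕ) = 2 * k := Fin.val_cast_of_lt (by omega)
  have d1 : i ≠ i + (k : Fin (3 * k - 1)) := by
    intro h
    have h0 : (k : Fin (3 * k - 1)) = 0 := (left_eq_add.mp h)
    have h1 := congrArg Fin.val h0
    rw [hvk, Fin.val_zero] at h1
    omega
  have d2 : i ≠ i + ((2 * k : ℕ) : Fin (3 * k - 1)) := by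
    intro h
    have h0 : ((2 * k : ℕ) : Fin (3 * k - 1)) = 0 := (left_eq_add.mp h)
    have h1 := congrArg Fin.val h0
    rw [hv2k, Fin.val_zero] at h1
    omega
  have d3 : i + (k : Fin (3 * k - 1)) ≠ i + ((2 * k : ℕ) : Fin (3 * k - 1)) := by
    intro h
    have hc := add_left_cancel h
    have h1 := congrArg Fin.val hc
    rw [hvk, hv2k] at h1
    omega
  set t3 : Finset (Fin (3 * k - 1)) :=
    {i, i + (k : Fin (3 * k - 1)), i + ((2 * k : ℕ) : Fin (3 * k - 1))} with ht3
  have nm1 : i ∉ ({i + (k : Fin (3 * k - 1)), i + ((2 * k : ℕ) : Fin (3 * k - 1))} :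
      Finset (Fin (3 * k - 1))) := by
    simp only [Finset.mem_insert, Finset.mem_singleton]
    push_neg
    exact ⟨d1, d2⟩
  have nm2 : i + (k : Fin (3 * k - 1)) ∉
      ({i + ((2 * k : ℕ) : Fin (3 * k - 1))} : Finset (Fin (3 * k - 1))) := by
    simp only [Finset.mem_singleton]
    exact d3
  have hsum3 : ∑ a ∈ t3, T a = n + w i := by
    rw [ht3, Finset.sum_insert nm1, Finset.sum_insert nm2, Finset.sum_singleton,
      ← add_assoc, three]
  have hcard3 : t3.card = 3 := by
    rw [ht3, Finset.card_insert_of_notMem nm1, Finset.card_insert_of_notMem nm2,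
      Finset.card_singleton]
  have hsplit : ∑ a ∈ Finset.univ \ t3, T a + ∑ a ∈ t3, T a = k * n := by
    rw [Finset.sum_sdiff (Finset.subset_univ t3), total]
  have hrest : ∑ a ∈ Finset.univ \ t3, T a ≤ (3 * k - 4) * s := by
    have hc : (Finset.univ \ t3).card = 3 * k - 4 := by
      rw [Finset.card_sdiff_of_subset (Finset.subset_univ t3), hcard3]
      simp
      omega
    calc ∑ a ∈ Finset.univ \ t3, T a ≤ (Finset.univ \ t3).card • s :=
          Finset.sum_le_card_nsmul _ _ s (fun a _ => key a)
      _ = (3 * k - 4) * s := by rw [hc, smul_eq_mul]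
  have hB2 : k * n ≤ (3 * k - 4) * s + (n + w i) := by
    rw [← hsplit, hsum3]
    exact add_le_add_left hrest _
  have hA2 : n + w i ≤ 3 * s := by
    have k1 := key i
    have k2 := key (i + (k : Fin (3 * k - 1)))
    have k3 := key (i + ((2 * k : ℕ) : Fin (3 * k - 1)))
    simp only [hT] at three
    omega
  constructor
  · have h4 : (4 : ℕ) ≤ 3 * k := by omega
    have hz : (k : ℤ) * n ≤ (3 * (k : ℤ) - 4) * s + ((n : ℤ) + w i) := by
      have h5 := hB2
      zify [h4] at h5
      linarith
    linarith
  · omega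
end

section
/- For integers k ≥ 2 and n with kn/(3k−1) an integer, the balanced blow-up Γ_k(p) of the Andrásfai graph Γ_k with classes of size p = n/(3k−1) is a triangle-free graph on n vertices with independence number exactly kp = kn/(3k−1) and exactly g_k(n, kn/(3k−1)) = kn²/(2(3k−1)) edges. -/
open Finset

lemma mod_sub_aux {N x y : ℕ} (hx : x < N) (hy : y < N) :
    (x + N - y) % N = if y ≤ x then x - y else x + N - y := by
  split
  · next h =>
    have h1 : x + N - y = (x - y) + N := by omega
    rw [h1, Nat.add_mod_right, Nat.mod_eq_of_lt (by omega)]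
  · exact Nat.mod_eq_of_lt (by omega)

lemma mod_cancel_aux {N a d : ℕ} (ha : a < N) (hd : d < N) :
    ((a + d) % N + N - a) % N = d := by
  rcases Nat.lt_or_ge (a + d) N with h | h
  · rw [Nat.mod_eq_of_lt h]
    have h1 : a + d + N - a = d + N := by omega
    rw [h1, Nat.add_mod_right, Nat.mod_eq_of_lt hd]
  · have h2 : (a + d) % N = a + d - N := by
      rw [Nat.mod_eq_sub_mod h, Nat.mod_eq_of_lt (by omega)]
    rw [h2]
    have h1 : a + d - N + N - a = d := by omega
    rw [h1, Nat.mod_eq_of_lt hd]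

lemma mod_cancel_aux' {N a b : ℕ} (ha : a < N) (hb : b < N) :
    (a + (b + N - a) % N) % N = b := by
  rw [mod_sub_aux hb ha]
  split
  · next h =>
    have h1 : a + (b - a) = b := by omega
    rw [h1, Nat.mod_eq_of_lt hb]
  · have h1 : a + (b + N - a) = b + N := by omega
    rw [h1, Nat.add_mod_right, Nat.mod_eq_of_lt hb]

lemma andrasfai_adj_iff {k : ℕ} (hk : 2 ≤ k) (a b : Fin (3 * k - 1)) :
    (andrasfai k).Adj a b ↔
      (b.val + (3 * k - 1) - a.val) % (3 * k - 1) ∈ Finset.Icc k (2 * k - 1) := by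
  have ha := a.isLt; have hb := b.isLt
  show (a ≠ b ∧ _) ↔ _
  simp only [ne_eq, Fin.ext_iff, Finset.mem_Icc, mod_sub_aux ha hb, mod_sub_aux hb ha]
  split_ifs <;> omega

lemma andrasfai_triangle_free {k : ℕ} (hk : 2 ≤ k) (a b c : Fin (3 * k - 1))
    (hab : (andrasfai k).Adj a b) (hbc : (andrasfai k).Adj b c)
    (hac : (andrasfai k).Adj a c) : False := by
  have ha := a.isLt; have hb := b.isLt; have hc := c.isLt
  rw [andrasfai_adj_iff hk] at hab hbc hac
  simp only [Finset.mem_Icc, mod_sub_aux hb ha, mod_sub_aux hc hb, mod_sub_aux hc ha]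
    at hab hbc hac
  split_ifs at hab hbc hac <;> omega

lemma andrasfai_indep_bound {k : ℕ} (hk : 2 ≤ k) (S : Finset (Fin (3 * k - 1)))
    (hS : ∀ a ∈ S, ∀ b ∈ S, ¬ (andrasfai k).Adj a b) : S.card ≤ k := by
  classical
  have key : ∀ a ∈ S, ∀ b ∈ S, a.val ≤ b.val →
      (b.val - a.val < k ∨ 2 * k ≤ b.val - a.val) := by
    intro a ha b hb hab
    have h := hS a ha b hb
    rw [andrasfai_adj_iff hk, mod_sub_aux b.isLt a.isLt] at h
    simp only [Finset.mem_Icc] at h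
    split_ifs at h <;> omega
  rcases S.eq_empty_or_nonempty with rfl | hSne
  · simp
  · set s1 := S.min' hSne with hs1
    have hs1S : s1 ∈ S := S.min'_mem hSne
    have hs1le : ∀ s ∈ S, s1.val ≤ s.val := fun s hs => S.min'_le s hs
    set A := S.filter (fun s => s.val < s1.val + k) with hA
    set B := S.filter (fun s => ¬ s.val < s1.val + k) with hB
    have hcard : A.card + B.card = S.card :=
      Finset.card_filter_add_card_filter_not _
    have hB2k : ∀ b ∈ B, s1.val + 2 * k ≤ b.val := by
      intro b hb
      rw [hB, Finset.mem_filter] at hb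
      have := key s1 hs1S b hb.1 (hs1le b hb.1)
      omega
    rcases B.eq_empty_or_nonempty with hBe | hBne
    · have hAsub : A.image Fin.val ⊆ Finset.Icc s1.val (s1.val + (k - 1)) := by
        intro x hx
        simp only [Finset.mem_image] at hx
        obtain ⟨a, haA, rfl⟩ := hx
        rw [hA, Finset.mem_filter] at haA
        rw [Finset.mem_Icc]
        have := hs1le a haA.1
        have := haA.2
        omega
      have hAcard : A.card ≤ k := by
        have h1 := Finset.card_le_card hAsub
        rw [Finset.card_image_of_injective _ Fin.val_injective, Nat.card_Icc] at h1
        omega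
      rw [hBe] at hcard
      simp only [Finset.card_empty] at hcard
      omega
    · set b1 := B.min' hBne with hb1
      have hb1B : b1 ∈ B := B.min'_mem hBne
      have hb1S : b1 ∈ S := (Finset.mem_filter.1 hb1B).1
      have hb1ge : s1.val + 2 * k ≤ b1.val := hB2k b1 hb1B
      have hb1lt := b1.isLt
      have hAle : ∀ a ∈ A, a.val + 2 * k ≤ b1.val := by
        intro a haA
        rw [hA, Finset.mem_filter] at haA
        have h1 := key a haA.1 b1 hb1S (by omega)
        omega
      have hAcard : A.card ≤ b1.val - 2 * k + 1 - s1.val := by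
        have hAsub : A.image Fin.val ⊆ Finset.Icc s1.val (b1.val - 2 * k) := by
          intro x hx
          simp only [Finset.mem_image] at hx
          obtain ⟨a, haA, rfl⟩ := hx
          have h1 := hAle a haA
          rw [hA, Finset.mem_filter] at haA
          have h2 := hs1le a haA.1
          rw [Finset.mem_Icc]
          omega
        have h1 := Finset.card_le_card hAsub
        rw [Finset.card_image_of_injective _ Fin.val_injective, Nat.card_Icc] at h1
        omega
      have hBcard : B.card ≤ 3 * k - 1 - b1.val := by
        have hBsub : B.image Fin.val ⊆ Finset.Icc b1.val (3 * k - 1 - 1) := by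
          intro x hx
          simp only [Finset.mem_image] at hx
          obtain ⟨b, hbB, rfl⟩ := hx
          have h1 : b1 ≤ b := B.min'_le b hbB
          have h2 := b.isLt
          rw [Finset.mem_Icc]
          exact ⟨h1, by omega⟩
        have h1 := Finset.card_le_card hBsub
        rw [Finset.card_image_of_injective _ Fin.val_injective, Nat.card_Icc] at h1
        omega
      omega

lemma andrasfai_degree {k : ℕ} (hk : 2 ≤ k) (a : Fin (3 * k - 1))
    [Fintype ((andrasfai k).neighborSet a)] : (andrasfai k).degree a = k := by
  have ha := a.isLt
  have hN : 2 * k - 1 < 3 * k - 1 := by omega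
  have himg : (andrasfai k).neighborFinset a =
      (Finset.Icc k (2 * k - 1)).image
        (fun d => (⟨(a.val + d) % (3 * k - 1), Nat.mod_lt _ (by omega)⟩ : Fin (3 * k - 1))) := by
    ext b
    rw [SimpleGraph.mem_neighborFinset, andrasfai_adj_iff hk, Finset.mem_image]
    constructor
    · intro h
      refine ⟨(b.val + (3 * k - 1) - a.val) % (3 * k - 1), h, ?_⟩
      exact Fin.ext (mod_cancel_aux' ha b.isLt)
    · rintro ⟨d, hd, rfl⟩
      simp only [Finset.mem_Icc] at hd
      have hdlt : d < 3 * k - 1 := by omega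
      simpa [mod_cancel_aux ha hdlt, Finset.mem_Icc] using hd
  rw [← SimpleGraph.card_neighborFinset_eq_degree, himg, Finset.card_image_of_injOn,
    Nat.card_Icc]
  · omega
  · intro d1 h1 d2 h2 he
    simp only [Finset.coe_Icc, Set.mem_Icc] at h1 h2
    have hv : (a.val + d1) % (3 * k - 1) = (a.val + d2) % (3 * k - 1) :=
      congrArg Fin.val he
    have e1 := mod_cancel_aux ha (show d1 < 3 * k - 1 by omega)
    have e2 := mod_cancel_aux ha (show d2 < 3 * k - 1 by omega)
    rw [← e1, ← e2, hv]

lemma blowup_degree {k p : ℕ} (hk : 2 ≤ k) (v : Σ _i : Fin (3 * k - 1), Fin p)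
    [Fintype (((andrasfai k).blowup fun _ => p).neighborSet v)] :
    ((andrasfai k).blowup fun _ => p).degree v = k * p := by
  classical
  rw [← SimpleGraph.card_neighborSet_eq_degree]
  have e : ((andrasfai k).blowup fun _ => p).neighborSet v ≃
      ((andrasfai k).neighborSet v.1) × Fin p :=
    { toFun := fun x => (⟨x.1.1, x.2⟩, x.1.2)
      invFun := fun y => ⟨⟨y.1.1, y.2⟩, y.1.2⟩
      left_inv := fun x => rfl
      right_inv := fun y => rfl }
  rw [Fintype.card_congr e, Fintype.card_prod, Fintype.card_fin,
    SimpleGraph.card_neighborSet_eq_degree, andrasfai_degree hk]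

open scoped Classical in
/-- For `k ≥ 2` and `n = (3k-1)p` (so that `kn/(3k-1) = kp` is an integer), the
balanced blow-up `Γ_k(p)` is a triangle-free graph on `n` vertices with
independence number exactly `kp = kn/(3k-1)` and exactly
`g_k(n, kn/(3k-1)) = kn²/(2(3k-1))` edges. -/
theorem stmt_12 (k p n : ℕ) (hk : 2 ≤ k) (hn : n = (3 * k - 1) * p) :
    (((andrasfai k).blowup fun _ => p).CliqueFree 3) ∧
    Fintype.card (Σ _i : Fin (3 * k - 1), Fin p) = n ∧
    ((∃ S : Finset (Σ _i : Fin (3 * k - 1), Fin p),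
        (∀ a ∈ S, ∀ b ∈ S, ¬ ((andrasfai k).blowup fun _ => p).Adj a b) ∧
        S.card = k * p) ∧
      (∀ S : Finset (Σ _i : Fin (3 * k - 1), Fin p),
        (∀ a ∈ S, ∀ b ∈ S, ¬ ((andrasfai k).blowup fun _ => p).Adj a b) →
        S.card ≤ k * p)) ∧
    2 * (3 * k - 1) * ((andrasfai k).blowup fun _ => p).edgeFinset.card
      = k * n ^ 2 := by
  refine ⟨?_, ?_, ⟨?_, ?_⟩, ?_⟩
  · -- triangle-free
    intro t ht
    obtain ⟨a, b, c, hab, hac, hbc, rfl⟩ := Finset.card_eq_three.1 ht.2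
    have h1 : (andrasfai k).Adj a.1 b.1 :=
      ht.1 (by simp) (by simp) hab
    have h2 : (andrasfai k).Adj a.1 c.1 :=
      ht.1 (by simp) (by simp) hac
    have h3 : (andrasfai k).Adj b.1 c.1 :=
      ht.1 (by simp) (by simp) hbc
    exact andrasfai_triangle_free hk a.1 b.1 c.1 h1 h3 h2
  · simp [hn, mul_comm]
  · -- large independent set
    refine ⟨(((Finset.range k).image
        (fun t => (⟨(k + t) % (3 * k - 1), Nat.mod_lt _ (by omega)⟩ : Fin (3 * k - 1)))).sigma
        fun _ => Finset.univ), ?_, ?_⟩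
    · intro a ha b hb hadj
      rw [Finset.mem_sigma] at ha hb
      obtain ⟨t1, ht1, he1⟩ := Finset.mem_image.1 ha.1
      obtain ⟨t2, ht2, he2⟩ := Finset.mem_image.1 hb.1
      rw [Finset.mem_range] at ht1 ht2
      have hv1 : a.1.val = k + t1 := by
        rw [← he1]; exact Nat.mod_eq_of_lt (by omega)
      have hv2 : b.1.val = k + t2 := by
        rw [← he2]; exact Nat.mod_eq_of_lt (by omega)
      have hadj' : (andrasfai k).Adj a.1 b.1 := hadj
      rw [andrasfai_adj_iff hk, Finset.mem_Icc, hv1, hv2,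
        mod_sub_aux (show k + t2 < 3 * k - 1 by omega)
          (show k + t1 < 3 * k - 1 by omega)] at hadj'
      split_ifs at hadj' <;> omega
    · rw [Finset.card_sigma]
      simp only [Finset.card_univ, Fintype.card_fin, Finset.sum_const, smul_eq_mul]
      rw [Finset.card_image_of_injOn, Finset.card_range]
      intro t1 h1 t2 h2 he
      simp only [Finset.coe_range, Set.mem_Iio] at h1 h2
      have hv : (k + t1) % (3 * k - 1) = (k + t2) % (3 * k - 1) := congrArg Fin.val he
      rw [Nat.mod_eq_of_lt (by omega), Nat.mod_eq_of_lt (by omega)] at hv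
      omega
  · -- independence upper bound
    intro S hS
    set T := S.image Sigma.fst with hT
    have hTind : ∀ a ∈ T, ∀ b ∈ T, ¬ (andrasfai k).Adj a b := by
      intro a ha b hb hadj
      obtain ⟨x, hx, rfl⟩ := Finset.mem_image.1 ha
      obtain ⟨y, hy, rfl⟩ := Finset.mem_image.1 hb
      exact hS x hx y hy hadj
    have h1 := andrasfai_indep_bound hk T hTind
    have hsub : S ⊆ T.sigma fun _ => Finset.univ := by
      intro x hx
      rw [Finset.mem_sigma]
      exact ⟨Finset.mem_image_of_mem _ hx, Finset.mem_univ _⟩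
    have h2 := Finset.card_le_card hsub
    rw [Finset.card_sigma] at h2
    simp only [Finset.card_univ, Fintype.card_fin, Finset.sum_const, smul_eq_mul] at h2
    calc S.card ≤ T.card * p := h2
      _ ≤ k * p := Nat.mul_le_mul_right p h1
  · -- edge count
    have hsum := SimpleGraph.sum_degrees_eq_twice_card_edges
      ((andrasfai k).blowup fun _ => p)
    rw [Finset.sum_congr rfl (fun v _ => blowup_degree hk v), Finset.sum_const,
      Finset.card_univ, smul_eq_mul] at hsum
    have hcard : Fintype.card (Σ _i : Fin (3 * k - 1), Fin p) = (3 * k - 1) * p := by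
      simp [mul_comm]
    rw [hcard] at hsum
    calc 2 * (3 * k - 1) * ((andrasfai k).blowup fun _ => p).edgeFinset.card
        = (3 * k - 1) * (2 * ((andrasfai k).blowup fun _ => p).edgeFinset.card) := by
          ring
      _ = (3 * k - 1) * ((3 * k - 1) * p * (k * p)) := by rw [← hsum]
      _ = k * ((3 * k - 1) * p) ^ 2 := by ring
      _ = k * n ^ 2 := by rw [hn]
end
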